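/- Every theorem of the conditional logic C2 is true at every world of every order model under its valuation (C2 is sound with respect to order models). -/
import Mathlib


/-- Sentences of the language L: atoms p₀,p₁,…, negation, conjunction, and the
binary conditional `>` (written `cond`). -/
inductive Formula : Type
  | atom : ℕ → Formula
  | neg : Formula → Formula
  | conj : Formula → Formula → Formula
  | cond : Formula → Formula → Formula
  deriving DecidableEq

namespace Formula

/-- Material implication, defined as usual: p → q := ¬(p ∧ ¬q). -/
def impl (p q : Formula) : Formula := (p.conj q.neg).neg
/-- Disjunction, defined as usual: p ∨ q := ¬(¬p ∧ ¬q). -/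
def disj (p q : Formula) : Formula := (p.neg.conj q.neg).neg
/-- Material biconditional, defined as usual. -/
def biimp (p q : Formula) : Formula := (p.impl q).conj (q.impl p)
/-- □p abbreviates ¬p > p. -/
def box (p : Formula) : Formula := p.neg.cond p
/-- ◇p abbreviates ¬□¬p. -/
def dia (p : Formula) : Formula := p.neg.box.neg
/-- ⊥ abbreviates p₀ ∧ ¬p₀. -/
def bot : Formula := (atom 0).conj (atom 0).neg

end Formula

/-- `p` is a classical propositional tautology (treating conditional formulas and
atoms alike as propositional atoms): every assignment of truth values that respects
¬ and ∧ makes `p` true. -/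
def IsTautology (p : Formula) : Prop :=
  ∀ v : Formula → Prop,
    (∀ q, v q.neg ↔ ¬ v q) →
    (∀ q r, v (q.conj r) ↔ v q ∧ v r) →
    v p

/-- Derivability from the axioms of C2 (all classical tautologies, Identity,
Reciprocity, MP, CEM) together with extra axioms `Ax`, closed under Detachment and
Normality; i.e., the smallest extension of C2 containing `Ax` that is closed under
Detachment and Normality. -/
inductive DerivC2 (Ax : Formula → Prop) : Formula → Prop
  | extra {p : Formula} : Ax p → DerivC2 Ax p
  | taut {p : Formula} : IsTautology p → DerivC2 Ax p
  | id (p : Formula) : DerivC2 Ax (p.cond p)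
  | recip (p q r : Formula) :
      DerivC2 Ax (((p.cond q).conj ((q.cond p).conj (p.cond r))).impl (q.cond r))
  | mpAx (p q : Formula) : DerivC2 Ax ((p.cond q).impl (p.impl q))
  | cem (p q : Formula) : DerivC2 Ax ((p.cond q).disj (p.cond q.neg))
  | detach {p q : Formula} : DerivC2 Ax (p.impl q) → DerivC2 Ax p → DerivC2 Ax q
  | normality {p q r : Formula} (s : Formula) : DerivC2 Ax ((p.conj q).impl r) →
      DerivC2 Ax (((s.cond p).conj (s.cond q)).impl (s.cond r))

/-- Stalnaker's conditional logic C2. -/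
def C2 : Formula → Prop := DerivC2 (fun _ => False)

/-- An order frame: a nonempty type of worlds `W` together with, for each world
`w`, a strict well-order `lt w` (writing `lt w x y` for `x <_w y`) of a subset of
`W` (the field of `lt w`: the relation is transitive, well-founded, and connected
on its field), such that `x <_w y` implies `w = x` or `w <_w x`. -/
structure OrderFrame (W : Type) : Type where
  nonempty : Nonempty W
  lt : W → W → W → Prop
  trans : ∀ w x y z, lt w x y → lt w y z → lt w x z
  wf : ∀ w, WellFounded (lt w)
  connected : ∀ w x y, (∃ z, lt w x z ∨ lt w z x) → (∃ z, lt w y z ∨ lt w z y) →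
      x ≠ y → lt w x y ∨ lt w y x
  center : ∀ w x y, lt w x y → x = w ∨ lt w w x

namespace OrderFrame

variable {W : Type}

/-- Accessibility: `v ∈ R(w)` where `R(w) = {w} ∪ {v : w <_w v}`. -/
def acc (F : OrderFrame W) (w v : W) : Prop := v = w ∨ F.lt w w v

/-- `x ≤_w y` iff `x, y ∈ R(w)` and not `y <_w x`. -/
def wkle (F : OrderFrame W) (w x y : W) : Prop :=
  F.acc w x ∧ F.acc w y ∧ ¬ F.lt w y x

end OrderFrame

/-- Truth at a world of an order model: atoms via the valuation `V`, Booleans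
classically, and `p > q` is true at `w` iff either no world in `R(w)` satisfies `p`,
or there is `y ∈ R(w)` satisfying `p ∧ q` such that no `x <_w y` satisfies `p`. -/
def Truth {W : Type} (F : OrderFrame W) (V : ℕ → Set W) : Formula → W → Prop
  | .atom n, w => w ∈ V n
  | .neg p, w => ¬ Truth F V p w
  | .conj p q, w => Truth F V p w ∧ Truth F V q w
  | .cond p q, w =>
      (∀ v, F.acc w v → ¬ Truth F V p v) ∨
      ∃ y, F.acc w y ∧ Truth F V p y ∧ Truth F V q y ∧
        ∀ x, F.lt w x y → ¬ Truth F V p x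

section Aux

variable {W : Type}

lemma acc_self' (F : OrderFrame W) (w : W) : F.acc w w := Or.inl rfl

lemma acc_of_lt' (F : OrderFrame W) {w x y : W} (h : F.lt w x y) : F.acc w x := by
  rcases F.center w x y h with h' | h'
  · exact Or.inl h'
  · exact Or.inr h'

/-- existence of a minimal accessible world satisfying `P`. -/
lemma exists_min' (F : OrderFrame W) (w : W) (P : W → Prop)
    (h : ∃ v, F.acc w v ∧ P v) :
    ∃ y, F.acc w y ∧ P y ∧ ∀ x, F.lt w x y → ¬ P x := by
  classical
  set S : Set W := {x | F.acc w x ∧ P x} with hS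
  have hne : S.Nonempty := h
  obtain ⟨y, hyS, hmin⟩ := (F.wf w).has_min S hne
  refine ⟨y, hyS.1, hyS.2, fun x hx hPx => ?_⟩
  exact hmin x ⟨acc_of_lt' F hx, hPx⟩ hx

/-- uniqueness of minimal accessible worlds: if `y` satisfies `Q` and nothing
below `y` satisfies `P`, while `y'` satisfies `P` and nothing below `y'`
satisfies `Q`, then `y = y'`. -/
lemma min_unique' (F : OrderFrame W) (w : W) (P Q : W → Prop) {y y' : W}
    (hy : F.acc w y) (hPy : Q y) (hmy : ∀ x, F.lt w x y → ¬ P x)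
    (hy' : F.acc w y') (hPy' : P y') (hmy' : ∀ x, F.lt w x y' → ¬ Q x) : y = y' := by
  by_contra hne
  have field1 : ∃ z, F.lt w y z ∨ F.lt w z y := by
    rcases hy with h1 | h1
    · rcases hy' with h2 | h2
      · exact absurd (h1.trans h2.symm) hne
      · exact ⟨y', Or.inl (h1 ▸ h2)⟩
    · exact ⟨w, Or.inr h1⟩
  have field2 : ∃ z, F.lt w y' z ∨ F.lt w z y' := by
    rcases hy' with h2 | h2
    · rcases hy with h1 | h1
      · exact absurd (h1.trans h2.symm) hne
      · exact ⟨y, Or.inl (h2 ▸ h1)⟩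
    · exact ⟨w, Or.inr h2⟩
  rcases F.connected w y y' field1 field2 hne with h | h
  · exact hmy' y h hPy
  · exact hmy y' h hPy'

lemma truth_impl (F : OrderFrame W) (V : ℕ → Set W) {p q : Formula} {w : W} :
    Truth F V (p.impl q) w ↔ (Truth F V p w → Truth F V q w) := by
  simp only [Formula.impl, Truth]; tauto

lemma truth_disj (F : OrderFrame W) (V : ℕ → Set W) {p q : Formula} {w : W} :
    Truth F V (p.disj q) w ↔ Truth F V p w ∨ Truth F V q w := by
  simp only [Formula.disj, Truth]; tauto

end Aux

/-- C2 is sound with respect to order models: every theorem of C2 is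
true at every world of every order model under its valuation. -/
theorem c2_sound_for_order_models (p : Formula) (hp : C2 p) :
    ∀ (W : Type) (F : OrderFrame W) (V : ℕ → Set W) (w : W), Truth F V p w := by
  induction hp with
  | extra h => exact absurd h (fun h => h)
  | taut h =>
      intro W F V w
      exact h (fun q => Truth F V q w) (fun q => Iff.rfl) (fun q r => Iff.rfl)
  | id p =>
      intro W F V w
      by_cases h : ∃ v, F.acc w v ∧ Truth F V p v
      · obtain ⟨y, hy, hPy, hmin⟩ := exists_min' F w (Truth F V p) h
        exact Or.inr ⟨y, hy, hPy, hPy, hmin⟩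
      · exact Or.inl (fun v hv hp => h ⟨v, hv, hp⟩)
  | recip p q r =>
      intro W F V w
      rw [truth_impl]
      rintro ⟨hpq, hqp, hpr⟩
      rcases hpq with hpq | ⟨y, hy, hyp, hyq, hym⟩
      · -- no p-world accessible
        rcases hqp with hqp | ⟨z, hz, hzq, hzp, hzm⟩
        · exact Or.inl hqp
        · exact absurd hzp (hpq z hz)
      · -- y is the minimal p-world; q holds there
        rcases hqp with hqp | ⟨z, hz, hzq, hzp, hzm⟩
        · exact absurd hyq (hqp y hy)
        rcases hpr with hpr | ⟨u, hu, hup, hur, hum⟩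
        · exact absurd hyp (hpr y hy)
        -- y = z and y = u
        have hyz : y = z :=
          min_unique' F w (Truth F V p) (Truth F V q) hy hyq hym hz hzp hzm
        have hyu : y = u :=
          min_unique' F w (Truth F V p) (Truth F V p) hy hyp hym hu hup hum
        subst hyz
        subst hyu
        exact Or.inr ⟨y, hy, hyq, hur, hzm⟩
  | mpAx p q =>
      intro W F V w
      rw [truth_impl, truth_impl]
      rintro (h | ⟨y, hy, hyp, hyq, hym⟩)
      · intro hpw
        exact absurd hpw (h w (acc_self' F w))
      · intro hpw
        have hyw : y = w := by
          rcases hy with h1 | h1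
          · exact h1
          · exact absurd hpw (hym w h1)
        exact hyw ▸ hyq
  | cem p q =>
      intro W F V w
      rw [truth_disj]
      by_cases h : ∃ v, F.acc w v ∧ Truth F V p v
      · obtain ⟨y, hy, hPy, hmin⟩ := exists_min' F w (Truth F V p) h
        by_cases hq : Truth F V q y
        · exact Or.inl (Or.inr ⟨y, hy, hPy, hq, hmin⟩)
        · exact Or.inr (Or.inr ⟨y, hy, hPy, hq, hmin⟩)
      · exact Or.inl (Or.inl (fun v hv hp => h ⟨v, hv, hp⟩))
  | detach h1 h2 ih1 ih2 =>
      intro W F V w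
      exact (truth_impl F V).mp (ih1 W F V w) (ih2 W F V w)
  | @normality p q r s h ih =>
      intro W F V w
      rw [truth_impl]
      rintro ⟨hsp, hsq⟩
      rcases hsp with hsp | ⟨y, hy, hys, hyp, hym⟩
      · exact Or.inl hsp
      rcases hsq with hsq | ⟨z, hz, hzs, hzq, hzm⟩
      · exact absurd hys (hsq y hy)
      have hyz : y = z :=
        min_unique' F w (Truth F V _) (Truth F V _) hy hys hym hz hzs hzm
      subst hyz
      have hr : Truth F V r y := by
        have := (truth_impl F V).mp (ih W F V y)
        exact this ⟨hyp, hzq⟩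
      exact Or.inr ⟨y, hy, hys, hr, hym⟩
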